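/- Let φ : G̃ → G be a surjective group homomorphism, let the group G act by homeomorphisms on a topological space X and the group G̃ act by homeomorphisms on a connected topological space X̃, and let p : X̃ → X be a covering map satisfying p(g̃•x̃) = φ(g̃)•p(x̃) for all g̃ ∈ G̃ and x̃ ∈ X̃. Suppose X is locally connected and d is a G-invariant metric on X inducing its topology. Then there exists a G̃-invariant metric ρ on X̃ inducing the topology of X̃ such that p is locally isometric: every point of X̃ has an open neighbourhood U with d(p(a), p(b)) = ρ(a,b) for all a, b ∈ U. -/

import Mathlib

set_option linter.unusedSectionVars false

open Set Metric Pointwise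

namespace Stmt4Aux

variable {G' G E X : Type*} [Group G'] [Group G]
    [TopologicalSpace E] [MetricSpace X]
    [MulAction G X] [ContinuousConstSMul G X]
    [MulAction G' E] [ContinuousConstSMul G' E]

variable (p : E → X)

/-- `W` is a sheet over `V`: an open set on which `p` restricts to a homeomorphism onto `V`,
recorded via a continuous section `σ`. -/
def SheetOf (V : Set X) (W : Set E) : Prop :=
  IsOpen W ∧ ∃ σ : X → E, ContinuousOn σ V ∧ (∀ u ∈ V, p (σ u) = u ∧ σ u ∈ W) ∧
    ∀ e ∈ W, σ (p e) = e

/-- `𝒲` witnesses that `V` is evenly covered. -/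
def GoodCover (V : Set X) (𝒲 : Set (Set E)) : Prop :=
  IsOpen V ∧ ⋃₀ 𝒲 = p ⁻¹' V ∧ 𝒲.PairwiseDisjoint id ∧ ∀ W ∈ 𝒲, SheetOf p V W

def Good (V : Set X) : Prop := ∃ 𝒲, GoodCover p V 𝒲

/-- radius function -/
noncomputable def srad (u : X) : ℝ :=
  sSup {r : ℝ | 0 ≤ r ∧ r ≤ 1 ∧ ∃ V, Good p V ∧ ball u r ⊆ V}

/-- link relation -/
def Lk (a b : E) : Prop :=
  ∃ C : Set E, IsPreconnected C ∧ a ∈ C ∧ b ∈ C ∧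
    p '' C ⊆ ball (p a) (srad p (p a) / 4) ∧ p '' C ⊆ ball (p b) (srad p (p b) / 4)

def IsCh (a b : E) (n : ℕ) (f : ℕ → E) : Prop :=
  f 0 = a ∧ f n = b ∧ ∀ i < n, Lk p (f i) (f (i + 1))

noncomputable def cost (f : ℕ → E) (n : ℕ) : ℝ :=
  ∑ i ∈ Finset.range n, dist (p (f i)) (p (f (i + 1)))

def CS (a b : E) : Set ℝ := {c | ∃ n f, IsCh p a b n f ∧ cost p f n = c}

noncomputable def rho (a b : E) : ℝ := sInf (CS p a b)

variable {p}

theorem SheetOf.injOn {V W} (h : SheetOf p V W) : Set.InjOn p W := by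
  obtain ⟨-, σ, -, -, hσ⟩ := h
  intro a ha b hb hab
  rw [← hσ a ha, ← hσ b hb, hab]

/-- image of an open subset of a sheet is open -/
theorem SheetOf.image_open {V W} (h : SheetOf p V W) (hV : IsOpen V) (hWV : W ⊆ p ⁻¹' V)
    {s : Set E} (hs : IsOpen s) (hsW : s ⊆ W) : IsOpen (p '' s) := by
  obtain ⟨-, σ, hσc, hσV, hσW⟩ := h
  have : p '' s = V ∩ σ ⁻¹' s := by
    ext u
    constructor
    · rintro ⟨e, he, rfl⟩
      exact ⟨hWV (hsW he), by rw [mem_preimage, hσW e (hsW he)]; exact he⟩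
    · rintro ⟨hu, hu'⟩
      exact ⟨σ u, hu', (hσV u hu).1⟩
  rw [this]
  exact hσc.isOpen_inter_preimage hV hs

/-- connected slices of a sheet -/
theorem SheetOf.slice_preconnected {V W} (h : SheetOf p V W) {N : Set X} (hNV : N ⊆ V)
    (hN : IsPreconnected N) : IsPreconnected (W ∩ p ⁻¹' N) := by
  obtain ⟨-, σ, hσc, hσV, hσW⟩ := h
  have : W ∩ p ⁻¹' N = σ '' N := by
    ext e
    constructor
    · rintro ⟨he, he'⟩
      exact ⟨p e, he', hσW e he⟩
    · rintro ⟨u, hu, rfl⟩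
      exact ⟨(hσV u (hNV hu)).2, by
        rw [mem_preimage, (hσV u (hNV hu)).1]; exact hu⟩
  rw [this]
  exact hN.image σ (hσc.mono hNV)

/-- every point of the base has a good neighbourhood -/
theorem exists_good (hcov : IsCoveringMap p) (u : X) : ∃ V, u ∈ V ∧ Good p V := by
  rcases isEmpty_or_nonempty (p ⁻¹' {u}) with hne | hne
  · obtain ⟨-, U, huU, hUo, -, H, -⟩ := hcov u
    refine ⟨U, huU, ∅, hUo, ?_, Set.pairwiseDisjoint_empty,
      fun W hW => absurd hW (Set.notMem_empty W)⟩
    rw [Set.sUnion_empty]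
    ext e
    exact ⟨fun h => absurd h (Set.notMem_empty e), fun he => (IsEmpty.false (H ⟨e, he⟩).2).elim⟩
  have hd := (hcov u).discreteTopology_fiber
  obtain ⟨t, hu⟩ : ∃ t : Bundle.Trivialization (p ⁻¹' {u}) p, u ∈ t.baseSet :=
    ⟨_, (hcov u).mem_toTrivialization_baseSet⟩
  refine ⟨t.baseSet, hu, {W | ∃ i : p ⁻¹' {u}, W = t.source ∩ (fun e => (t e).2) ⁻¹' {i}},
    t.open_baseSet, ?_, ?_, ?_⟩
  · apply subset_antisymm
    · rintro e ⟨W, ⟨i, rfl⟩, he, -⟩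
      rw [← t.source_eq]; exact he
    · intro e he
      rw [← t.source_eq] at he
      exact ⟨_, ⟨(t e).2, rfl⟩, he, rfl⟩
  · rintro W ⟨i, rfl⟩ W' ⟨j, rfl⟩ hne
    refine Set.disjoint_left.2 ?_
    rintro e ⟨-, hi⟩ ⟨-, hj⟩
    simp only [Set.mem_preimage, Set.mem_singleton_iff] at hi hj
    exact hne (by rw [← hi, ← hj])
  · rintro W ⟨i, rfl⟩
    constructor
    · exact (continuous_snd.comp_continuousOn
        t.toOpenPartialHomeomorph.continuousOn).isOpen_inter_preimage t.open_source
        (isOpen_discrete _)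
    · refine ⟨fun v => t.toOpenPartialHomeomorph.symm (v, i), ?_, ?_, ?_⟩
      · apply t.toOpenPartialHomeomorph.continuousOn_symm.comp
          (Continuous.continuousOn (by fun_prop))
        intro v hv
        exact t.mem_target.2 hv
      · intro v hv
        refine ⟨t.proj_symm_apply' hv, t.map_target (t.mem_target.2 hv), ?_⟩
        simp only [Set.mem_preimage, Set.mem_singleton_iff]
        rw [t.apply_symm_apply' hv]
      · rintro e ⟨he, hi⟩
        simp only [Set.mem_preimage, Set.mem_singleton_iff] at hi
        rw [← hi]
        exact t.symm_apply_mk_proj he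

theorem good_smul (φ : G' →* G) (hφ : Function.Surjective φ)
    (hequiv : ∀ (g : G') (x : E), p (g • x) = φ g • p x)
    (g : G) {V : Set X} (h : Good p V) : Good p (g • V) := by
  obtain ⟨g', rfl⟩ := hφ g
  obtain ⟨𝒲, hVo, hU, hdisj, hsh⟩ := h
  have key : ∀ e : E, p (g'⁻¹ • e) = (φ g')⁻¹ • p e := by
    intro e
    rw [← map_inv]
    exact hequiv g'⁻¹ e
  refine ⟨(fun W => g' • W) '' 𝒲, hVo.smul (φ g'), ?_, ?_, ?_⟩
  · ext e
    constructor
    · rintro ⟨W', ⟨W, hW, rfl⟩, he⟩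
      rw [mem_smul_set_iff_inv_smul_mem] at he
      have h1 : p (g'⁻¹ • e) ∈ V := (Set.ext_iff.1 hU _).1 ⟨W, hW, he⟩
      rw [Set.mem_preimage, mem_smul_set_iff_inv_smul_mem, ← key]
      exact h1
    · intro he
      rw [Set.mem_preimage, mem_smul_set_iff_inv_smul_mem, ← key, ← Set.mem_preimage,
        ← hU] at he
      obtain ⟨W, hW, hmem⟩ := he
      exact ⟨g' • W, ⟨W, hW, rfl⟩, by rwa [mem_smul_set_iff_inv_smul_mem]⟩
  · rintro W' ⟨W₁, h₁, rfl⟩ W'' ⟨W₂, h₂, rfl⟩ hne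
    have hne' : W₁ ≠ W₂ := fun h => hne (by rw [h])
    refine Set.disjoint_left.2 fun {e} he₁ he₂ => ?_
    rw [id_eq, mem_smul_set_iff_inv_smul_mem] at he₁ he₂
    exact Set.disjoint_left.1 (hdisj h₁ h₂ hne') he₁ he₂
  · rintro W' ⟨W, hW, rfl⟩
    obtain ⟨hWo, σ, hσc, hσV, hσW⟩ := hsh W hW
    refine ⟨hWo.smul g', fun v => g' • σ ((φ g')⁻¹ • v), ?_, ?_, ?_⟩
    · apply (continuous_const_smul g').comp_continuousOn
      apply hσc.comp (continuous_const_smul _).continuousOn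
      intro v hv
      rwa [← mem_smul_set_iff_inv_smul_mem]
    · intro v hv
      rw [mem_smul_set_iff_inv_smul_mem] at hv
      constructor
      · rw [hequiv, (hσV _ hv).1, smul_inv_smul]
      · exact smul_mem_smul_set (hσV _ hv).2
    · intro e he
      rw [mem_smul_set_iff_inv_smul_mem] at he
      show g' • σ ((φ g')⁻¹ • p e) = e
      rw [(key e).symm, hσW _ he, smul_inv_smul]

section srad

theorem srad_bddAbove (u : X) :
    BddAbove {r : ℝ | 0 ≤ r ∧ r ≤ 1 ∧ ∃ V, Good p V ∧ ball u r ⊆ V} :=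
  ⟨1, fun _ h => h.2.1⟩

theorem srad_exists_mem (hcov : IsCoveringMap p) (u : X) :
    ∃ r, 0 < r ∧ r ∈ {r : ℝ | 0 ≤ r ∧ r ≤ 1 ∧ ∃ V, Good p V ∧ ball u r ⊆ V} := by
  obtain ⟨V, huV, hV⟩ := exists_good hcov u
  have hVo : IsOpen V := by
    obtain ⟨𝒲, h⟩ := hV; exact h.1
  obtain ⟨ε, hε, hb⟩ := Metric.isOpen_iff.1 hVo u huV
  exact ⟨min ε 1, lt_min hε one_pos, le_of_lt (lt_min hε one_pos), min_le_right _ _,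
    V, hV, (ball_subset_ball (min_le_left _ _)).trans hb⟩

theorem srad_pos (hcov : IsCoveringMap p) (u : X) : 0 < srad p u := by
  obtain ⟨r, hr, hmem⟩ := srad_exists_mem hcov u
  exact hr.trans_le (le_csSup (srad_bddAbove u) hmem)

theorem srad_lip (hcov : IsCoveringMap p) (u v : X) : srad p u ≤ srad p v + dist u v := by
  obtain ⟨r₀, hr₀, hmem₀⟩ := srad_exists_mem hcov u
  apply csSup_le ⟨r₀, hmem₀⟩
  rintro r ⟨hr0, hr1, V, hV, hb⟩
  have hd0 : (0:ℝ) ≤ dist u v := dist_nonneg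
  rcases le_or_gt r (dist u v) with h | h
  · have : 0 < srad p v := srad_pos hcov v
    linarith
  · have : r - dist u v ≤ srad p v := by
      apply le_csSup (srad_bddAbove v)
      refine ⟨by linarith, by linarith, V, hV, ?_⟩
      intro w hw
      apply hb
      rw [mem_ball] at *
      calc dist w u ≤ dist w v + dist v u := dist_triangle _ _ _
        _ < r - dist u v + dist v u := by linarith
        _ = r := by rw [dist_comm v u]; ring
    linarith

theorem exists_good_ball (hcov : IsCoveringMap p) (u : X) :
    ∃ V, Good p V ∧ ball u (srad p u / 2) ⊆ V := by
  have h : srad p u / 2 < srad p u := by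
    have := srad_pos hcov u; linarith
  obtain ⟨r, ⟨-, -, V, hV, hb⟩, hr⟩ :=
    exists_lt_of_lt_csSup ⟨_, (srad_exists_mem hcov u).choose_spec.2⟩ h
  exact ⟨V, hV, (ball_subset_ball hr.le).trans hb⟩

theorem smul_ball_eq (hinv : ∀ (g : G) (a b : X), dist (g • a) (g • b) = dist a b)
    (g : G) (u : X) (r : ℝ) : g • ball u r = ball (g • u) r := by
  ext v
  rw [mem_smul_set_iff_inv_smul_mem, mem_ball, mem_ball]
  rw [← hinv g (g⁻¹ • v) u, smul_inv_smul]

theorem srad_smul (φ : G' →* G) (hφ : Function.Surjective φ)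
    (hequiv : ∀ (g : G') (x : E), p (g • x) = φ g • p x)
    (hinv : ∀ (g : G) (a b : X), dist (g • a) (g • b) = dist a b)
    (g : G) (u : X) : srad p (g • u) = srad p u := by
  have key : ∀ (g : G) (u : X), srad p u ≤ srad p (g • u) := by
    intro g u
    have hsub : {r : ℝ | 0 ≤ r ∧ r ≤ 1 ∧ ∃ V, Good p V ∧ ball u r ⊆ V} ⊆
        {r : ℝ | 0 ≤ r ∧ r ≤ 1 ∧ ∃ V, Good p V ∧ ball (g • u) r ⊆ V} := by
      rintro r ⟨h0, h1, V, hV, hb⟩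
      refine ⟨h0, h1, g • V, good_smul φ hφ hequiv g hV, ?_⟩
      rw [← smul_ball_eq hinv]
      exact Set.smul_set_mono hb
    rcases Set.eq_empty_or_nonempty
        {r : ℝ | 0 ≤ r ∧ r ≤ 1 ∧ ∃ V, Good p V ∧ ball u r ⊆ V} with h | h
    · rw [srad, h, Real.sSup_empty]
      rcases Set.eq_empty_or_nonempty
          {r : ℝ | 0 ≤ r ∧ r ≤ 1 ∧ ∃ V, Good p V ∧ ball (g • u) r ⊆ V} with h' | h'
      · rw [srad, h', Real.sSup_empty]
      · obtain ⟨r, hr⟩ := h'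
        exact hr.1.trans (le_csSup (srad_bddAbove _) hr)
    · exact csSup_le_csSup (srad_bddAbove _) h hsub
  apply le_antisymm
  · have := key g⁻¹ (g • u)
    rwa [inv_smul_smul] at this
  · exact key g u

end srad

section link

theorem lk_symm {a b : E} (h : Lk p a b) : Lk p b a := by
  obtain ⟨C, h1, h2, h3, h4, h5⟩ := h
  exact ⟨C, h1, h3, h2, h5, h4⟩

theorem lk_refl (hcov : IsCoveringMap p) (a : E) : Lk p a a := by
  have hpos := srad_pos hcov (p a)
  refine ⟨{a}, isPreconnected_singleton, rfl, rfl, ?_, ?_⟩ <;>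
  · rintro x ⟨e, he, rfl⟩
    rw [Set.mem_singleton_iff] at he
    subst he
    exact mem_ball_self (by linarith)

theorem lk_smul (φ : G' →* G) (hφ : Function.Surjective φ)
    (hequiv : ∀ (g : G') (x : E), p (g • x) = φ g • p x)
    (hinv : ∀ (g : G) (a b : X), dist (g • a) (g • b) = dist a b)
    (g : G') {a b : E} (h : Lk p a b) : Lk p (g • a) (g • b) := by
  obtain ⟨C, h1, h2, h3, h4, h5⟩ := h
  have himg : p '' (g • C) = φ g • (p '' C) := by
    ext x
    constructor
    · rintro ⟨e, he, rfl⟩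
      obtain ⟨c, hc, rfl⟩ := he
      rw [hequiv]
      exact smul_mem_smul_set ⟨c, hc, rfl⟩
    · rintro ⟨y, ⟨c, hc, rfl⟩, rfl⟩
      refine ⟨g • c, smul_mem_smul_set hc, ?_⟩
      show p (g • c) = φ g • p c
      exact hequiv g c
  have hpre : IsPreconnected (g • C) := by
    rw [← Set.image_smul]
    exact h1.image _ (continuous_const_smul g).continuousOn
  refine ⟨g • C, hpre, smul_mem_smul_set h2, smul_mem_smul_set h3, ?_, ?_⟩
  · rw [himg, hequiv, srad_smul φ hφ hequiv hinv, ← smul_ball_eq hinv]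
    exact Set.smul_set_mono h4
  · rw [himg, hequiv, srad_smul φ hφ hequiv hinv, ← smul_ball_eq hinv]
    exact Set.smul_set_mono h5

end link

section chains

theorem cost_nonneg (f : ℕ → E) (n : ℕ) : 0 ≤ cost p f n :=
  Finset.sum_nonneg fun _ _ => dist_nonneg

theorem dist_le_cost {a b : E} {n : ℕ} {f : ℕ → E} (h : IsCh p a b n f) :
    dist (p a) (p b) ≤ cost p f n := by
  have := dist_le_range_sum_dist (fun i => p (f i)) n
  rwa [h.1, h.2.1] at this

theorem cost_prefix_le {f : ℕ → E} {m n : ℕ} (h : m ≤ n) : cost p f m ≤ cost p f n :=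
  Finset.sum_le_sum_of_subset_of_nonneg (Finset.range_subset_range.2 h)
    (fun _ _ _ => dist_nonneg)

theorem isCh_refl (a : E) : IsCh p a a 0 (fun _ => a) := ⟨rfl, rfl, fun i h => absurd h (by omega)⟩

theorem cost_refl (a : E) : cost p (fun _ => a) 0 = 0 := by simp [cost]

theorem chain_snoc {a b c : E} {n : ℕ} {f : ℕ → E} (h : IsCh p a b n f) (hbc : Lk p b c) :
    ∃ g, IsCh p a c (n + 1) g ∧ cost p g (n + 1) = cost p f n + dist (p b) (p c) := by
  refine ⟨fun i => if i ≤ n then f i else c, ⟨?_, ?_, ?_⟩, ?_⟩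
  · simp [h.1]
  · simp
  · intro i hi
    rcases Nat.lt_or_ge i n with h' | h'
    · simpa [Nat.le_of_lt h', Nat.succ_le_of_lt h'] using h.2.2 i h'
    · have : i = n := by omega
      subst this
      simpa [h.2.1] using hbc
  · rw [cost, Finset.sum_range_succ]
    congr 1
    · apply Finset.sum_congr rfl
      intro i hi
      rw [Finset.mem_range] at hi
      simp [Nat.le_of_lt hi, Nat.succ_le_of_lt hi]
    · simp [h.2.1]

theorem chain_reverse {a b : E} {n : ℕ} {f : ℕ → E} (h : IsCh p a b n f) :
    ∃ g, IsCh p b a n g ∧ cost p g n = cost p f n := by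
  refine ⟨fun i => f (n - i), ⟨by simp [h.2.1], by simp [h.1], ?_⟩, ?_⟩
  · intro i hi
    have h1 : n - i - 1 < n := by omega
    have h2 : n - i - 1 + 1 = n - i := by omega
    show Lk p (f (n - i)) (f (n - (i + 1)))
    rw [show n - (i + 1) = n - i - 1 from by omega]
    have := lk_symm (h.2.2 (n - i - 1) h1)
    rwa [h2] at this
  · rw [cost, cost, ← Finset.sum_range_reflect]
    apply Finset.sum_congr rfl
    intro i hi
    rw [Finset.mem_range] at hi
    rw [show n - (n - 1 - i) = i + 1 from by omega,
      show n - (n - 1 - i + 1) = i from by omega]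
    exact dist_comm _ _

theorem chain_append {a b c : E} {m n : ℕ} {f g : ℕ → E}
    (hf : IsCh p a b m f) (hg : IsCh p b c n g) :
    ∃ h, IsCh p a c (m + n) h ∧ cost p h (m + n) = cost p f m + cost p g n := by
  set h : ℕ → E := fun i => if i < m then f i else g (i - m) with hh
  have hagree : ∀ j, j ≤ m → h j = f j := by
    intro j hj
    rcases lt_or_eq_of_le hj with h' | h'
    · simp [hh, h']
    · subst h'
      simp [hh, hg.1, hf.2.1]
  have hagree2 : ∀ j, m ≤ j → h j = g (j - m) := fun j hj => by
    simp [hh, Nat.not_lt.2 hj]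
  refine ⟨h, ⟨?_, ?_, ?_⟩, ?_⟩
  · rw [hagree 0 (Nat.zero_le m), hf.1]
  · rw [hagree2 (m + n) (Nat.le_add_right m n), Nat.add_sub_cancel_left, hg.2.1]
  · intro i hi
    rcases Nat.lt_or_ge (i + 1) (m + 1) with h1 | h1
    · rw [hagree i (by omega), hagree (i + 1) (by omega)]
      exact hf.2.2 i (by omega)
    · rw [hagree2 i (by omega), hagree2 (i + 1) (by omega),
        show i + 1 - m = (i - m) + 1 from by omega]
      exact hg.2.2 (i - m) (by omega)
  · rw [cost, Finset.sum_range_add]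
    congr 1
    · apply Finset.sum_congr rfl
      intro i hi
      rw [Finset.mem_range] at hi
      rw [hagree i (by omega), hagree (i + 1) (by omega)]
    · apply Finset.sum_congr rfl
      intro i hi
      rw [hagree2 (m + i) (by omega), hagree2 (m + i + 1) (by omega),
        Nat.add_sub_cancel_left, show m + i + 1 - m = i + 1 from by omega]

theorem chain_smul (φ : G' →* G) (hφ : Function.Surjective φ)
    (hequiv : ∀ (g : G') (x : E), p (g • x) = φ g • p x)
    (hinv : ∀ (g : G) (a b : X), dist (g • a) (g • b) = dist a b)
    (g : G') {a b : E} {n : ℕ} {f : ℕ → E} (h : IsCh p a b n f) :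
    IsCh p (g • a) (g • b) n (fun i => g • f i) ∧
      cost p (fun i => g • f i) n = cost p f n := by
  refine ⟨⟨show g • f 0 = g • a from by rw [h.1], show g • f n = g • b from by rw [h.2.1],
    fun i hi => lk_smul φ hφ hequiv hinv g (h.2.2 i hi)⟩, ?_⟩
  apply Finset.sum_congr rfl
  intro i hi
  rw [hequiv, hequiv, hinv]

end chains

section main

variable [LocallyConnectedSpace X]

theorem local_nbhd (hcov : IsCoveringMap p) (b : E) {η : ℝ} (hη : 0 < η)
    (hη2 : η ≤ srad p (p b) / 100) :
    ∃ U : Set E, IsOpen U ∧ b ∈ U ∧ (∀ c ∈ U, dist (p b) (p c) < η) ∧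
      ∀ c ∈ U, ∀ c' ∈ U, Lk p c c' := by
  obtain ⟨V, ⟨𝒲, hVo, hU, hdisj, hsh⟩, hb⟩ := exists_good_ball hcov (p b)
  have hpos : 0 < srad p (p b) := srad_pos hcov (p b)
  have hbV : b ∈ p ⁻¹' V := hb (mem_ball_self (by linarith))
  rw [← hU] at hbV
  obtain ⟨W, hW, hbW⟩ := hbV
  set N := connectedComponentIn (ball (p b) η) (p b) with hN
  have hNo : IsOpen N := isOpen_ball.connectedComponentIn
  have hNb : p b ∈ N := mem_connectedComponentIn (mem_ball_self hη)
  have hNsub : N ⊆ ball (p b) η := connectedComponentIn_subset _ _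
  have hNV : N ⊆ V := hNsub.trans ((ball_subset_ball (by linarith)).trans hb)
  have hsheet := hsh W hW
  have hdistb : ∀ c ∈ W ∩ p ⁻¹' N, dist (p b) (p c) < η := by
    rintro c ⟨-, hc⟩
    have := hNsub hc
    rwa [mem_ball, dist_comm] at this
  have key : ∀ c ∈ W ∩ p ⁻¹' N, p '' (W ∩ p ⁻¹' N) ⊆ ball (p c) (srad p (p c) / 4) := by
    rintro c hc x ⟨e, he, rfl⟩
    have h1 : dist (p b) (p c) < η := hdistb c hc
    have h2 : dist (p b) (p e) < η := hdistb e he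
    have h3 : srad p (p b) ≤ srad p (p c) + dist (p b) (p c) := srad_lip hcov _ _
    rw [mem_ball]
    have h6 : dist (p e) (p c) ≤ dist (p b) (p e) + dist (p b) (p c) := by
      have := dist_triangle (p e) (p b) (p c)
      rwa [dist_comm (p e) (p b)] at this
    linarith
  refine ⟨W ∩ p ⁻¹' N, hsheet.1.inter (hNo.preimage hcov.continuous), ⟨hbW, hNb⟩, hdistb, ?_⟩
  intro c hc c' hc'
  exact ⟨W ∩ p ⁻¹' N, hsheet.slice_preconnected hNV isPreconnected_connectedComponentIn,
    hc, hc', key c hc, key c' hc'⟩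

theorem chain_in_sheet (hcov : IsCoveringMap p) {a : E} {V : Set X} {𝒲 : Set (Set E)}
    (hGC : GoodCover p V 𝒲) (hball : ball (p a) (srad p (p a) / 2) ⊆ V)
    {W : Set E} (hW : W ∈ 𝒲) (haW : a ∈ W)
    {b : E} {n : ℕ} {f : ℕ → E} (hch : IsCh p a b n f)
    (hc : cost p f n < srad p (p a) / 100) : b ∈ W := by
  obtain ⟨hVo, hU, hdisj, hsh⟩ := hGC
  have hpos := srad_pos hcov (p a)
  have main : ∀ i, i ≤ n → f i ∈ W := by
    intro i
    induction i with
    | zero => intro _; rw [hch.1]; exact haW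
    | succ i ih =>
      intro hin
      have hiW : f i ∈ W := ih (by omega)
      have hdi : dist (p a) (p (f i)) ≤ cost p f i := by
        have h0 := dist_le_range_sum_dist (fun j => p (f j)) i
        simpa only [hch.1, cost] using h0
      have hdi' : dist (p a) (p (f i)) < srad p (p a) / 100 :=
        lt_of_le_of_lt (hdi.trans (cost_prefix_le (by omega))) hc
      obtain ⟨C, hC1, hC2, hC3, hC4, -⟩ := hch.2.2 i (by omega)
      have hCV : C ⊆ p ⁻¹' V := by
        intro e he
        apply Set.mem_preimage.2
        apply hball
        rw [mem_ball]
        have h4 : dist (p (f i)) (p e) < srad p (p (f i)) / 4 := by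
          have := hC4 ⟨e, he, rfl⟩
          rwa [mem_ball, dist_comm] at this
        have h5 : srad p (p (f i)) ≤ srad p (p a) + dist (p a) (p (f i)) := by
          have := srad_lip hcov (p (f i)) (p a)
          rwa [dist_comm] at this
        have h6 : dist (p e) (p a) ≤ dist (p (f i)) (p e) + dist (p a) (p (f i)) := by
          have := dist_triangle (p e) (p (f i)) (p a)
          rw [dist_comm (p e) (p (f i)), dist_comm (p (f i)) (p a)] at this
          exact this
        linarith
      have hCW : C ⊆ W := by
        refine hC1.subset_left_of_subset_union (hsh W hW).1
          (isOpen_sUnion fun W' (hW' : W' ∈ 𝒲 \ {W}) => (hsh W' hW'.1).1) ?_ ?_ ⟨f i, hC2, hiW⟩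
        · rw [Set.disjoint_sUnion_right]
          intro W' hW'
          exact hdisj hW hW'.1 (Ne.symm hW'.2)
        · intro e he
          have : e ∈ ⋃₀ 𝒲 := by rw [hU]; exact hCV he
          obtain ⟨W'', hW'', he''⟩ := this
          by_cases hWe : W'' = W
          · exact Or.inl (hWe ▸ he'')
          · exact Or.inr ⟨W'', ⟨hW'', hWe⟩, he''⟩
      exact hCW hC3
  have := main n le_rfl
  rwa [hch.2.1] at this

variable [ConnectedSpace E]

theorem cs_nonempty (hcov : IsCoveringMap p) (a b : E) : (CS p a b).Nonempty := by
  have hmem : ∀ c : E, ∀ U : Set E, (∀ d ∈ U, Lk p c d) →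
      ∀ d ∈ U, (CS p a c).Nonempty → (CS p a d).Nonempty := by
    intro c U hlk d hd ⟨x, n, f, hch, hcost⟩
    obtain ⟨g, hg, -⟩ := chain_snoc hch (hlk d hd)
    exact ⟨_, _, _, hg, rfl⟩
  have hclopen : IsClopen {c | (CS p a c).Nonempty} := by
    constructor
    · rw [← isOpen_compl_iff, isOpen_iff_forall_mem_open]
      intro c hc
      obtain ⟨U, hUo, hcU, -, hlk⟩ := local_nbhd hcov c
        (by linarith [srad_pos hcov (p c)] : (0:ℝ) < srad p (p c) / 100) le_rfl
      refine ⟨U, ?_, hUo, hcU⟩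
      intro d hd hdCS
      exact hc (hmem d U (fun e he => hlk d hd e he) c hcU hdCS)
    · rw [isOpen_iff_forall_mem_open]
      intro c hc
      obtain ⟨U, hUo, hcU, -, hlk⟩ := local_nbhd hcov c
        (by linarith [srad_pos hcov (p c)] : (0:ℝ) < srad p (p c) / 100) le_rfl
      refine ⟨U, ?_, hUo, hcU⟩
      intro d hd
      exact hmem c U (fun e he => hlk c hcU e he) d hd hc
  have ha : a ∈ {c | (CS p a c).Nonempty} := ⟨0, 0, fun _ => a, isCh_refl a, rfl⟩
  rcases isClopen_iff.1 hclopen with h | h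
  · rw [h] at ha; exact absurd ha (Set.notMem_empty a)
  · have : b ∈ {c | (CS p a c).Nonempty} := h ▸ Set.mem_univ b
    exact this

theorem cs_bddBelow (a b : E) : BddBelow (CS p a b) := by
  refine ⟨0, ?_⟩
  rintro c ⟨n, f, -, rfl⟩
  exact cost_nonneg f n

theorem dist_le_rho (hcov : IsCoveringMap p) (a b : E) : dist (p a) (p b) ≤ rho p a b := by
  apply le_csInf (cs_nonempty hcov a b)
  rintro c ⟨n, f, hch, rfl⟩
  exact dist_le_cost hch

theorem rho_nonneg (hcov : IsCoveringMap p) (a b : E) : 0 ≤ rho p a b :=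
  le_trans dist_nonneg (dist_le_rho hcov a b)

theorem rho_le_cost {a b : E} {n : ℕ} {f : ℕ → E} (h : IsCh p a b n f) :
    rho p a b ≤ cost p f n :=
  csInf_le (cs_bddBelow a b) ⟨n, f, h, rfl⟩

theorem rho_self (hcov : IsCoveringMap p) (a : E) : rho p a a = 0 := by
  refine le_antisymm ?_ (rho_nonneg hcov a a)
  have := rho_le_cost (isCh_refl (p := p) a)
  rwa [cost_refl] at this

theorem rho_symm (a b : E) : rho p a b = rho p b a := by
  have key : ∀ a b : E, CS p a b ⊆ CS p b a := by
    rintro a b c ⟨n, f, hch, rfl⟩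
    obtain ⟨g, hg, hgc⟩ := chain_reverse hch
    exact ⟨n, g, hg, hgc⟩
  rw [rho, rho, Set.Subset.antisymm (key a b) (key b a)]

theorem rho_triangle (hcov : IsCoveringMap p) (a b c : E) :
    rho p a c ≤ rho p a b + rho p b c := by
  apply le_of_forall_pos_le_add
  intro ε hε
  obtain ⟨x, ⟨m, f, hf, rfl⟩, hx⟩ :=
    Real.lt_sInf_add_pos (cs_nonempty hcov a b) (half_pos hε)
  obtain ⟨y, ⟨n, g, hg, rfl⟩, hy⟩ :=
    Real.lt_sInf_add_pos (cs_nonempty hcov b c) (half_pos hε)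
  obtain ⟨h, hh, hhc⟩ := chain_append hf hg
  have := rho_le_cost hh
  rw [hhc] at this
  have e1 : sInf (CS p a b) = rho p a b := rfl
  have e2 : sInf (CS p b c) = rho p b c := rfl
  rw [e1] at hx
  rw [e2] at hy
  linarith

theorem rho_smul (φ : G' →* G) (hφ : Function.Surjective φ)
    (hequiv : ∀ (g : G') (x : E), p (g • x) = φ g • p x)
    (hinv : ∀ (g : G) (a b : X), dist (g • a) (g • b) = dist a b)
    (g : G') (a b : E) : rho p (g • a) (g • b) = rho p a b := by
  have key : ∀ (g : G') (a b : E), CS p a b ⊆ CS p (g • a) (g • b) := by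
    rintro g a b x ⟨n, f, hch, rfl⟩
    obtain ⟨hg, hgc⟩ := chain_smul φ hφ hequiv hinv g hch
    exact ⟨n, _, hg, hgc⟩
  have : CS p (g • a) (g • b) = CS p a b := by
    apply Set.Subset.antisymm ?_ (key g a b)
    have := key g⁻¹ (g • a) (g • b)
    rwa [inv_smul_smul, inv_smul_smul] at this
  rw [rho, rho, this]

theorem rho_small_sheet (hcov : IsCoveringMap p) {a : E} {V : Set X} {𝒲 : Set (Set E)}
    (hGC : GoodCover p V 𝒲) (hball : ball (p a) (srad p (p a) / 2) ⊆ V)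
    {W : Set E} (hW : W ∈ 𝒲) (haW : a ∈ W)
    {b : E} (h : rho p a b < srad p (p a) / 100) : b ∈ W := by
  obtain ⟨x, ⟨n, f, hch, rfl⟩, hlt⟩ := exists_lt_of_csInf_lt (cs_nonempty hcov a b) h
  exact chain_in_sheet hcov hGC hball hW haW hch hlt

end main

end Stmt4Aux

open Stmt4Aux in
/-- For a covering in the category of spaces with group actions, any invariant metric
on the base lifts to an invariant metric on the total space making the projection a
local isometry. -/
theorem stmt4 {G' G E X : Type*} [Group G'] [Group G]
    [TopologicalSpace E] [MetricSpace X] [ConnectedSpace E] [LocallyConnectedSpace X]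
    [MulAction G X] [ContinuousConstSMul G X]
    [MulAction G' E] [ContinuousConstSMul G' E]
    (φ : G' →* G) (hφ : Function.Surjective φ)
    (p : E → X) (hcov : IsCoveringMap p)
    (hequiv : ∀ (g : G') (x : E), p (g • x) = φ g • p x)
    (hinv : ∀ (g : G) (a b : X), dist (g • a) (g • b) = dist a b) :
    ∃ ρ : E → E → ℝ,
      (∀ a b : E, 0 ≤ ρ a b) ∧
      (∀ a b : E, ρ a b = 0 ↔ a = b) ∧
      (∀ a b : E, ρ a b = ρ b a) ∧
      (∀ a b c : E, ρ a c ≤ ρ a b + ρ b c) ∧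
      (∀ (g : G') (a b : E), ρ (g • a) (g • b) = ρ a b) ∧
      (∀ s : Set E, IsOpen s ↔ ∀ a ∈ s, ∃ ε > 0, {b : E | ρ a b < ε} ⊆ s) ∧
      (∀ x : E, ∃ U : Set E, IsOpen U ∧ x ∈ U ∧
        ∀ a ∈ U, ∀ b ∈ U, dist (p a) (p b) = ρ a b) := by
  refine ⟨rho p, fun a b => rho_nonneg hcov a b, ?_, fun a b => rho_symm a b,
    fun a b c => rho_triangle hcov a b c, fun g a b => rho_smul φ hφ hequiv hinv g a b,
    ?_, ?_⟩
  · intro a b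
    constructor
    · intro h
      obtain ⟨V, hGood, hball⟩ := exists_good_ball hcov (p a)
      obtain ⟨𝒲, hGC⟩ := hGood
      have hpos := srad_pos hcov (p a)
      have haV : a ∈ p ⁻¹' V := hball (mem_ball_self (by linarith))
      rw [← hGC.2.1] at haV
      obtain ⟨W, hW, haW⟩ := haV
      have hbW : b ∈ W := rho_small_sheet hcov hGC hball hW haW (by rw [h]; linarith)
      have hpab : p a = p b := by
        have h1 := dist_le_rho hcov a b
        rw [h] at h1
        exact dist_le_zero.1 h1
      exact (hGC.2.2.2 W hW).injOn haW hbW hpab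
    · rintro rfl
      exact rho_self hcov a
  · intro s
    constructor
    · intro hs a ha
      obtain ⟨V, hGood, hball⟩ := exists_good_ball hcov (p a)
      obtain ⟨𝒲, hGC⟩ := hGood
      have hpos := srad_pos hcov (p a)
      have haV : a ∈ p ⁻¹' V := hball (mem_ball_self (by linarith))
      rw [← hGC.2.1] at haV
      obtain ⟨W, hW, haW⟩ := haV
      have hsheet := hGC.2.2.2 W hW
      have hWV : W ⊆ p ⁻¹' V := by
        rw [← hGC.2.1]; exact fun e he => ⟨W, hW, he⟩
      have hopen : IsOpen (p '' (s ∩ W)) :=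
        hsheet.image_open hGC.1 hWV (hs.inter hsheet.1) Set.inter_subset_right
      have hmem : p a ∈ p '' (s ∩ W) := ⟨a, ⟨ha, haW⟩, rfl⟩
      obtain ⟨η, hη, hb2⟩ := Metric.isOpen_iff.1 hopen _ hmem
      refine ⟨min (srad p (p a) / 100) η, lt_min (by linarith) hη, ?_⟩
      intro b hb
      simp only [Set.mem_setOf_eq] at hb
      have hbW : b ∈ W :=
        rho_small_sheet hcov hGC hball hW haW (lt_of_lt_of_le hb (min_le_left _ _))
      have hdab : dist (p a) (p b) < η :=
        lt_of_le_of_lt (dist_le_rho hcov a b) (lt_of_lt_of_le hb (min_le_right _ _))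
      have hmem2 : p b ∈ p '' (s ∩ W) := hb2 (by rwa [mem_ball, dist_comm])
      obtain ⟨c, ⟨hcs, hcW⟩, hpc⟩ := hmem2
      have hcb : c = b := hsheet.injOn hcW hbW hpc
      rwa [← hcb]
    · intro h
      rw [isOpen_iff_forall_mem_open]
      intro a ha
      obtain ⟨ε, hε, hsub⟩ := h a ha
      have hpos := srad_pos hcov (p a)
      obtain ⟨U, hUo, haU, hdist, hlk⟩ := local_nbhd hcov a
        (lt_min (by linarith : (0:ℝ) < ε / 2) (by linarith)) (min_le_right _ _)
      refine ⟨U, ?_, hUo, haU⟩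
      intro b hb
      apply hsub
      simp only [Set.mem_setOf_eq]
      obtain ⟨g, hg, hgc⟩ := chain_snoc (isCh_refl (p := p) a) (hlk a haU b hb)
      have hle := rho_le_cost hg
      rw [hgc, cost_refl, zero_add] at hle
      have hd := hdist b hb
      calc rho p a b ≤ dist (p a) (p b) := hle
        _ < min (ε / 2) (srad p (p a) / 100) := hd
        _ ≤ ε / 2 := min_le_left _ _
        _ < ε := by linarith
  · intro x
    have hpos := srad_pos hcov (p x)
    obtain ⟨U, hUo, hxU, -, hlk⟩ := local_nbhd hcov x
      (by linarith : (0:ℝ) < srad p (p x) / 100) le_rfl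
    refine ⟨U, hUo, hxU, ?_⟩
    intro a ha b hb
    refine le_antisymm (dist_le_rho hcov a b) ?_
    obtain ⟨g, hg, hgc⟩ := chain_snoc (isCh_refl (p := p) a) (hlk a ha b hb)
    have hle := rho_le_cost hg
    rwa [hgc, cost_refl, zero_add] at hle
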